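/- If G is a group of order 2^λ with λ ≥ 5 and G is not cyclic, then G has at least 3λ − 1 subgroups. -/

import Mathlib

open Subgroup

section Aux
variable {G : Type*} [Group G]

lemma my_card_ne {A B : Subgroup G} (h : Nat.card A ≠ Nat.card B) : A ≠ B :=
  fun he => h (by rw [he])

lemma my_zpowers_ne_top (hnc : ¬ IsCyclic G) (x : G) : zpowers x ≠ ⊤ :=
  fun h => hnc ⟨⟨x, fun y => by
    have : y ∈ zpowers x := by rw [h]; exact Subgroup.mem_top y
    exact this⟩⟩

lemma my_card_subgroup_pow {lam : ℕ} [Finite G] (hcard : Nat.card G = 2 ^ lam)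
    (H : Subgroup G) : ∃ j ≤ lam, Nat.card H = 2 ^ j := by
  have hdvd : Nat.card H ∣ 2 ^ lam := hcard ▸ Subgroup.card_subgroup_dvd_card H
  obtain ⟨j, hj, hH⟩ := (Nat.dvd_prime_pow Nat.prime_two).1 hdvd
  exact ⟨j, hj, hH⟩

lemma my_cover_card [Finite G] (A B : Subgroup G) (hcov : ∀ x : G, x ∈ A ∨ x ∈ B) :
    Nat.card G + 1 ≤ Nat.card A + Nat.card B := by
  have hU : (A : Set G) ∪ B = Set.univ := by
    ext x; simpa using hcov x
  have hsum := Set.ncard_union_add_ncard_inter (A : Set G) (B : Set G)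
    (Set.toFinite _) (Set.toFinite _)
  have hin : 1 ≤ ((A : Set G) ∩ B).ncard := by
    rw [Nat.one_le_iff_ne_zero, ← Nat.pos_iff_ne_zero, Set.ncard_pos (Set.toFinite _)]
    exact ⟨1, A.one_mem, B.one_mem⟩
  have hA : (A : Set G).ncard = Nat.card A := (Nat.card_coe_set_eq _).symm
  have hB : (B : Set G).ncard = Nat.card B := (Nat.card_coe_set_eq _).symm
  have hGu : ((A : Set G) ∪ B).ncard = Nat.card G := by rw [hU, Set.ncard_univ]
  omega

lemma my_exists_le_card_pow {lam : ℕ} [Finite G] (hcard : Nat.card G = 2 ^ lam) (hlam : 1 ≤ lam)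
    (H : Subgroup G) (hne : H ≠ ⊤) :
    ∃ K : Subgroup G, Nat.card K = 2 ^ (lam - 1) ∧ H ≤ K := by
  have : Fact (Nat.Prime 2) := ⟨Nat.prime_two⟩
  obtain ⟨j, hj, hHc⟩ := my_card_subgroup_pow hcard H
  have hjle : j ≤ lam - 1 := by
    rcases Nat.lt_or_ge j lam with h | h
    · omega
    · exfalso; apply hne; apply Subgroup.eq_top_of_card_eq
      rw [hHc, hcard]; congr 1; omega
  exact Sylow.exists_subgroup_card_pow_prime_le 2
    (by rw [hcard]; exact pow_dvd_pow 2 (by omega)) H hHc hjle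

lemma my_index_two {lam : ℕ} [Finite G] (hcard : Nat.card G = 2 ^ lam) (hlam : 1 ≤ lam)
    {M : Subgroup G} (hM : Nat.card M = 2 ^ (lam - 1)) : M.index = 2 := by
  have h := Subgroup.card_mul_index M
  rw [hM, hcard] at h
  have h2 : (2:ℕ) ^ (lam - 1) * 2 = 2 ^ lam := by
    rw [← pow_succ]; congr 1; omega
  have hpos : 0 < (2:ℕ) ^ (lam - 1) := Nat.pow_pos (by norm_num)
  exact Nat.eq_of_mul_eq_mul_left hpos (h.trans h2.symm)

lemma my_conj_mem_of_index_two {M : Subgroup G} (h : M.index = 2) {m : G} (hm : m ∈ M)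
    (g : G) : g⁻¹ * m * g ∈ M := by
  rw [Subgroup.mul_mem_iff_of_index_two h, Subgroup.mul_mem_iff_of_index_two h]
  simp [hm]

lemma my_exists_zpowers_eq {K : Subgroup G} (hc : IsCyclic K) : ∃ a : G, zpowers a = K := by
  obtain ⟨⟨a, haK⟩, hgen⟩ := hc.exists_generator
  refine ⟨a, le_antisymm (zpowers_le.2 haK) fun x hx => ?_⟩
  obtain ⟨k, hk⟩ := Subgroup.mem_zpowers_iff.1 (hgen ⟨x, hx⟩)
  exact Subgroup.mem_zpowers_iff.2 ⟨k, by simpa [Subtype.ext_iff] using hk⟩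

lemma my_unique_involution {H : Type*} [Group H] [Finite H] (hc : IsCyclic H)
    {u v : H} (hu : u ^ 2 = 1) (hv : v ^ 2 = 1) (hu1 : u ≠ 1) (hv1 : v ≠ 1) : u = v := by
  classical
  cases nonempty_fintype H
  by_contra hne
  have h3 : ({1, u, v} : Finset H) ⊆ Finset.univ.filter (fun a => a ^ 2 = 1) := by
    intro a ha
    simp only [Finset.mem_insert, Finset.mem_singleton] at ha
    rcases ha with rfl | rfl | rfl <;> simp [hu, hv]
  have hcard3 : ({1, u, v} : Finset H).card = 3 := by
    rw [Finset.card_insert_of_notMem (by simp [Ne.symm hu1, Ne.symm hv1]),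
      Finset.card_insert_of_notMem (by simp [hne]), Finset.card_singleton]
  have hle := IsCyclic.card_pow_eq_one_le (α := H) (n := 2) (by norm_num)
  have := Finset.card_le_card h3
  omega

end Aux
section A
variable {G : Type*} [Group G]

lemma my_mem_zpowers_invol {u x : G} (hu : u ^ 2 = 1) (hx : x ∈ zpowers u) :
    x = 1 ∨ x = u := by
  have h2 : u ^ (2 : ℤ) = 1 := by
    rw [show (2:ℤ) = ((2:ℕ):ℤ) by norm_num, zpow_natCast, hu]
  obtain ⟨k, hk⟩ := Subgroup.mem_zpowers_iff.1 hx
  rcases Int.even_or_odd k with ⟨c, hc⟩ | ⟨c, hc⟩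
  · left; rw [← hk, hc, ← two_mul, zpow_mul, h2, one_zpow]
  · right; rw [← hk, hc, zpow_add, zpow_mul, h2, one_zpow, one_mul, zpow_one]

lemma my_quad {u v : G} (hcomm : u * v = v * u) (hu : u ^ 2 = 1) (hv : v ^ 2 = 1) :
    ∃ K : Subgroup G, (K : Set G) = {1, u, v, u * v} := by
  have huu : u * u = 1 := by rw [← pow_two]; exact hu
  have hvv : v * v = 1 := by rw [← pow_two]; exact hv
  have hvu : v * u = u * v := hcomm.symm
  have e2 : (u * v) * v = u := by rw [mul_assoc, hvv, mul_one]
  have e3 : u * (u * v) = v := by rw [← mul_assoc, huu, one_mul]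
  have e4 : v * (u * v) = u := by rw [hcomm, ← mul_assoc, hvv, one_mul]
  have e5 : (u * v) * u = v := by
    rw [mul_assoc, ← hcomm, ← mul_assoc, huu, one_mul]
  have e6 : (u * v) * (u * v) = 1 := by rw [mul_assoc u v, e4, huu]
  have iu : u⁻¹ = u := inv_eq_of_mul_eq_one_right huu
  have iv : v⁻¹ = v := inv_eq_of_mul_eq_one_right hvv
  have iuv : (u * v)⁻¹ = u * v := inv_eq_of_mul_eq_one_right e6
  refine ⟨{ carrier := {1, u, v, u * v}
            one_mem' := by simp
            mul_mem' := ?_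
            inv_mem' := ?_ }, rfl⟩
  · rintro a b ha hb
    simp only [Set.mem_insert_iff, Set.mem_singleton_iff] at ha hb ⊢
    rcases ha with rfl | rfl | rfl | rfl <;> rcases hb with rfl | rfl | rfl | rfl <;>
      simp [huu, hvv, hvu, e2, e3, e4, e5, e6]
  · rintro a ha
    simp only [Set.mem_insert_iff, Set.mem_singleton_iff] at ha ⊢
    rcases ha with rfl | rfl | rfl | rfl <;> simp [iu, iv, iuv]
end A
section D
variable {G : Type*} [Group G]

lemma my_lemmaD {lam : ℕ} (hlam : 4 ≤ lam) (a b : G)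
    (ha : orderOf a = 2 ^ (lam - 1)) (hb : orderOf b = 2 ^ (lam - 1))
    (hbo : b ∉ zpowers a)
    (hb2 : b ^ 2 ∈ zpowers a) (ha2 : a ^ 2 ∈ zpowers b)
    (hconj : b⁻¹ * a * b ∈ zpowers a) :
    ∃ u v : G, u * v = v * u ∧ u ^ 2 = 1 ∧ v ^ 2 = 1 ∧ u ≠ v ∧ u ≠ 1 ∧ v ≠ 1 := by
  set q' : ℕ := 2 ^ (lam - 4) with hq'
  have hq'pos : 0 < (q' : ℤ) := by positivity
  have hn8 : 2 ^ (lam - 1) = 8 * q' := by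
    rw [hq', show lam - 1 = 3 + (lam - 4) by omega, pow_add]; norm_num
  set N : ℤ := 8 * (q' : ℤ) with hN
  have hA : (orderOf a : ℤ) = N := by rw [ha, hn8]; push_cast; ring
  have hB : (orderOf b : ℤ) = N := by rw [hb, hn8]; push_cast; ring
  have hdvdA : ∀ z : ℤ, a ^ z = 1 ↔ N ∣ z := fun z => by
    rw [← orderOf_dvd_iff_zpow_eq_one, hA]
  have hdvdB : ∀ z : ℤ, b ^ z = 1 ↔ N ∣ z := fun z => by
    rw [← orderOf_dvd_iff_zpow_eq_one, hB]
  have haN : a ^ N = 1 := (hdvdA N).2 dvd_rfl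
  have hbN : b ^ N = 1 := (hdvdB N).2 dvd_rfl
  have ez : a ^ (2:ℤ) = a ^ (2:ℕ) := by rw [← zpow_natCast]; norm_num
  have ezb : b ^ (2:ℤ) = b ^ (2:ℕ) := by rw [← zpow_natCast]; norm_num
  -- b^2 = a^k with k = 2s
  obtain ⟨k, hk⟩ := Subgroup.mem_zpowers_iff.1 hb2
  have hk' : a ^ k = b ^ (2:ℤ) := by rw [hk, ezb]
  have hkeven : ∃ s : ℤ, k = 2 * s := by
    have h1 : a ^ (k * (4 * (q' : ℤ))) = 1 := by
      rw [zpow_mul, hk', ← zpow_mul, show (2:ℤ) * (4 * (q':ℤ)) = N by rw [hN]; ring, hbN]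
    obtain ⟨d, hd⟩ := (hdvdA _).1 h1
    refine ⟨d, ?_⟩
    have h2 : (k - 2 * d) * (4 * (q':ℤ)) = 0 := by rw [hN] at hd; linear_combination hd
    rcases mul_eq_zero.1 h2 with h3 | h3
    · linarith
    · exfalso; linarith
  obtain ⟨s, rfl⟩ := hkeven
  have hks : a ^ (2 * s) = b ^ (2:ℤ) := hk'
  -- s is odd
  have hsodd : ∃ c : ℤ, s = 2 * c + 1 := by
    rcases Int.even_or_odd s with ⟨c, hc⟩ | ⟨c, hc⟩
    · exfalso
      have h1 : b ^ (4 * (q':ℤ)) = 1 := by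
        have e1 : b ^ (4 * (q':ℤ)) = (b ^ (2:ℤ)) ^ (2 * (q':ℤ)) := by
          rw [← zpow_mul]; ring_nf
        rw [e1, ← hks, ← zpow_mul,
          show (2 * s) * (2 * (q':ℤ)) = N * c by rw [hc, hN]; ring, zpow_mul, haN, one_zpow]
      have h2 := Int.le_of_dvd (by positivity) ((hdvdB _).1 h1)
      rw [hN] at h2; linarith
    · exact ⟨c, by omega⟩
  obtain ⟨c, hsc⟩ := hsodd
  -- conjugation exponent m = 1 + 4 q' e
  obtain ⟨m, hm⟩ := Subgroup.mem_zpowers_iff.1 hconj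
  have h5 : ∀ j : ℤ, b⁻¹ * a ^ j * b = a ^ (m * j) := by
    intro j
    have h := conj_zpow (i := j) (a := b⁻¹) (b := a)
    rw [inv_inv] at h
    calc b⁻¹ * a ^ j * b = (b⁻¹ * a * b) ^ j := h.symm
      _ = (a ^ m) ^ j := by rw [hm]
      _ = a ^ (m * j) := (zpow_mul a m j).symm
  obtain ⟨l, hl⟩ := Subgroup.mem_zpowers_iff.1 ha2
  have hl' : b ^ l = a ^ (2:ℤ) := by rw [hl, ez]
  have hcomm2 : b⁻¹ * a ^ (2:ℤ) * b = a ^ (2:ℤ) := by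
    have hC : Commute b (a ^ (2:ℤ)) := by
      rw [← hl']; exact (Commute.refl b).zpow_right l
    rw [mul_assoc, ← hC.eq, ← mul_assoc, inv_mul_cancel, one_mul]
  have hme : ∃ e : ℤ, m = 1 + 4 * (q':ℤ) * e := by
    have h1 : a ^ (m * 2 - 2) = 1 := by
      have h2 : a ^ (m * 2) = a ^ (2:ℤ) := by rw [← h5 2, hcomm2]
      rw [zpow_sub, h2]
      simp
    obtain ⟨e, he⟩ := (hdvdA _).1 h1
    rw [hN] at he
    exact ⟨e, by linarith⟩
  obtain ⟨e, hme⟩ := hme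
  -- define the involutions
  set u : G := a ^ (4 * (q':ℤ)) with hu_def
  set z : ℤ := -(s + 2 * (q':ℤ) * e) with hz
  set v : G := b * a ^ z with hv_def
  have key : ∀ w : ℤ, b * a ^ w ∈ zpowers a → False := by
    intro w hw
    apply hbo
    have : b = (b * a ^ w) * (a ^ w)⁻¹ := by group
    rw [this]
    exact mul_mem hw (inv_mem (zpow_mem (mem_zpowers a) w))
  -- u commutes with v
  have hu_eq : u = b ^ (l * (2 * (q':ℤ))) := by
    rw [zpow_mul, hl', ← zpow_mul, hu_def]; ring_nf
  have hub : Commute u b := by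
    rw [hu_eq]; exact ((Commute.refl b).zpow_right _).symm
  have hua : Commute u (a ^ z) := (Commute.refl a).zpow_zpow _ _
  have hcommuv : u * v = v * u := (hub.mul_right hua).eq
  -- u^2 = 1
  have hu2 : u ^ 2 = 1 := by
    rw [hu_def, ← zpow_natCast, ← zpow_mul,
      show (4 * (q':ℤ)) * ((2:ℕ):ℤ) = N by rw [hN]; push_cast; ring, haN]
  -- v^2 = 1
  have hvv : v * v = 1 := by
    have h1 : v * v = (b * b) * (b⁻¹ * a ^ z * b) * a ^ z := by rw [hv_def]; group
    have hbb : b * b = a ^ (2 * s) := by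
      rw [hks, ezb, pow_two]
    rw [h5, hbb, ← zpow_add, ← zpow_add] at h1
    rw [h1, show 2 * s + m * z + z = N * (-(e * (c + 1) + (q':ℤ) * e ^ 2)) by
      rw [hz, hme, hsc, hN]; ring, zpow_mul, haN, one_zpow]
  have hv2 : v ^ 2 = 1 := by rw [pow_two]; exact hvv
  -- distinctness
  have hune : u ≠ 1 := by
    intro h
    have h2 := Int.le_of_dvd (by positivity) ((hdvdA _).1 (hu_def ▸ h))
    rw [hN] at h2; linarith
  have hvne : v ≠ 1 := by
    intro h
    apply key z
    rw [show b * a ^ z = v from rfl, h]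
    exact one_mem _
  have huv : u ≠ v := by
    intro h
    apply key z
    rw [show b * a ^ z = v from rfl, ← h, hu_def]
    exact zpow_mem (mem_zpowers a) _
  exact ⟨u, v, hcommuv, hu2, hv2, huv, hune, hvne⟩
end D

section B
variable {G : Type*} [Group G]

lemma my_proper_card_le {lam : ℕ} [Finite G] (hcard : Nat.card G = 2 ^ lam)
    (H : Subgroup G) (hne : H ≠ ⊤) : Nat.card H ≤ 2 ^ (lam - 1) := by
  obtain ⟨j, hj, hH⟩ := my_card_subgroup_pow hcard H
  have hjne : j ≠ lam := fun h =>
    hne (Subgroup.eq_top_of_card_eq _ (by rw [hH, hcard, h]))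
  rw [hH]
  exact Nat.pow_le_pow_right (by norm_num) (by omega)

lemma my_pow_sum (lam : ℕ) (hlam : 1 ≤ lam) : 2 ^ (lam - 1) + 2 ^ (lam - 1) = 2 ^ lam := by
  rw [← two_mul, ← pow_succ']; congr 1; omega

lemma my_mem_maximal {lam : ℕ} [Finite G] (hcard : Nat.card G = 2 ^ lam) (hlam : 1 ≤ lam)
    (hnc : ¬ IsCyclic G) (x : G) :
    ∃ K : Subgroup G, Nat.card K = 2 ^ (lam - 1) ∧ x ∈ K := by
  obtain ⟨K, hK, hle⟩ := my_exists_le_card_pow hcard hlam (zpowers x) (my_zpowers_ne_top hnc x)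
  exact ⟨K, hK, hle (mem_zpowers x)⟩

lemma my_three_maximals {lam : ℕ} [Finite G] (hcard : Nat.card G = 2 ^ lam) (hlam : 1 ≤ lam)
    (hnc : ¬ IsCyclic G) :
    ∃ K1 K2 K3 : Subgroup G, (Nat.card K1 = 2 ^ (lam - 1) ∧ Nat.card K2 = 2 ^ (lam - 1)
      ∧ Nat.card K3 = 2 ^ (lam - 1)) ∧ K1 ≠ K2 ∧ K1 ≠ K3 ∧ K2 ≠ K3 := by
  have hsum := my_pow_sum lam hlam
  obtain ⟨K1, hK1, _⟩ := my_mem_maximal hcard hlam hnc 1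
  by_cases h2 : ∀ K : Subgroup G, Nat.card K = 2 ^ (lam - 1) → K = K1
  · exfalso
    have hall : ∀ x : G, x ∈ K1 := fun x => by
      obtain ⟨K, hK, hx⟩ := my_mem_maximal hcard hlam hnc x
      exact (h2 K hK) ▸ hx
    have htop : K1 = ⊤ := (Subgroup.eq_top_iff' K1).2 hall
    rw [htop, Subgroup.card_top, hcard] at hK1
    have : 2 ^ (lam - 1) < 2 ^ lam := Nat.pow_lt_pow_right one_lt_two (by omega)
    omega
  push_neg at h2
  obtain ⟨K2, hK2, hne12⟩ := h2
  by_cases h3 : ∀ K : Subgroup G, Nat.card K = 2 ^ (lam - 1) → K = K1 ∨ K = K2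
  · exfalso
    have hcov : ∀ x : G, x ∈ K1 ∨ x ∈ K2 := fun x => by
      obtain ⟨K, hK, hx⟩ := my_mem_maximal hcard hlam hnc x
      rcases h3 K hK with rfl | rfl
      · exact Or.inl hx
      · exact Or.inr hx
    have := my_cover_card K1 K2 hcov
    rw [hK1, hK2, hcard] at this
    omega
  push_neg at h3
  obtain ⟨K3, hK3, hne13, hne23⟩ := h3
  exact ⟨K1, K2, K3, ⟨hK1, hK2, hK3⟩, fun h => hne12 h.symm, fun h => hne13 h.symm,
    fun h => hne23 h.symm⟩

lemma my_two_outside {lam : ℕ} [Finite G] (hcard : Nat.card G = 2 ^ lam) (hlam : 1 ≤ lam)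
    (hnc : ¬ IsCyclic G) (M : Subgroup G) (hM : Nat.card M = 2 ^ (lam - 1)) :
    ∃ x y : G, x ∉ M ∧ y ∉ M ∧ zpowers x ≠ zpowers y := by
  have hsum := my_pow_sum lam hlam
  have hlt : 2 ^ (lam - 1) < 2 ^ lam := Nat.pow_lt_pow_right one_lt_two (by omega)
  have hMne : M ≠ ⊤ := fun h => by rw [h, Subgroup.card_top, hcard] at hM; omega
  obtain ⟨x, hx⟩ : ∃ x, x ∉ M := by
    by_contra h; push_neg at h; exact hMne ((Subgroup.eq_top_iff' M).2 h)
  by_contra hcon; push_neg at hcon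
  have hcov : ∀ z : G, z ∈ M ∨ z ∈ zpowers x := by
    intro z
    by_cases hz : z ∈ M
    · exact Or.inl hz
    · exact Or.inr ((hcon z x hz hx) ▸ mem_zpowers z)
  have hc := my_cover_card M (zpowers x) hcov
  have hle := my_proper_card_le hcard (zpowers x) (my_zpowers_ne_top hnc x)
  rw [hcard, hM] at hc
  omega

lemma my_invol_noncyclic_max {lam : ℕ} [Finite G] (hcard : Nat.card G = 2 ^ lam) (hlam : 3 ≤ lam)
    {u v : G} (hcomm : u * v = v * u) (hu : u ^ 2 = 1) (hv : v ^ 2 = 1)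
    (huv : u ≠ v) (hu1 : u ≠ 1) (hv1 : v ≠ 1) :
    ∃ M : Subgroup G, Nat.card M = 2 ^ (lam - 1) ∧ ¬ IsCyclic M ∧ u ∈ M ∧ v ∈ M := by
  obtain ⟨K, hK⟩ := my_quad hcomm hu hv
  have hKu : u ∈ K := by rw [← SetLike.mem_coe, hK]; simp
  have hKv : v ∈ K := by rw [← SetLike.mem_coe, hK]; simp
  have hKcard : Nat.card K ≤ 4 := by
    have h1 : Nat.card K = (K : Set G).ncard := Nat.card_coe_set_eq _
    rw [h1, hK]
    calc ({1, u, v, u*v} : Set G).ncard ≤ ({u, v, u*v} : Set G).ncard + 1 :=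
          Set.ncard_insert_le _ _
      _ ≤ (({v, u*v} : Set G).ncard + 1) + 1 := by
          exact Nat.add_le_add_right (Set.ncard_insert_le _ _) 1
      _ ≤ ((({u*v} : Set G).ncard + 1) + 1) + 1 := by
          exact Nat.add_le_add_right (Nat.add_le_add_right (Set.ncard_insert_le _ _) 1) 1
      _ = 4 := by rw [Set.ncard_singleton]
  have h8 : (8:ℕ) ≤ 2 ^ lam := by
    calc (8:ℕ) = 2 ^ 3 := by norm_num
      _ ≤ 2 ^ lam := Nat.pow_le_pow_right (by norm_num) hlam
  have hKne : K ≠ ⊤ := by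
    intro h
    rw [h, Subgroup.card_top, hcard] at hKcard
    omega
  obtain ⟨M, hMc, hMle⟩ := my_exists_le_card_pow hcard (by omega) K hKne
  refine ⟨M, hMc, ?_, hMle hKu, hMle hKv⟩
  intro hcyc
  apply huv
  have h1 := my_unique_involution hcyc (u := (⟨u, hMle hKu⟩ : M)) (v := ⟨v, hMle hKv⟩)
    (Subtype.ext (by simpa using hu)) (Subtype.ext (by simpa using hv))
    (fun h => hu1 (by simpa using congrArg Subtype.val h))
    (fun h => hv1 (by simpa using congrArg Subtype.val h))
  exact congrArg Subtype.val h1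

lemma my_exists_noncyclic_maximal {lam : ℕ} [Finite G] (hcard : Nat.card G = 2 ^ lam)
    (hlam : 4 ≤ lam) (hnc : ¬ IsCyclic G) :
    ∃ M : Subgroup G, Nat.card M = 2 ^ (lam - 1) ∧ ¬ IsCyclic M := by
  obtain ⟨K1, K2, K3, ⟨c1, c2, c3⟩, n12, n13, n23⟩ := my_three_maximals hcard (by omega) hnc
  by_cases h1 : IsCyclic K1
  swap
  · exact ⟨K1, c1, h1⟩
  by_cases h2 : IsCyclic K2
  swap
  · exact ⟨K2, c2, h2⟩
  obtain ⟨a, haeq⟩ := my_exists_zpowers_eq h1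
  obtain ⟨b, hbeq⟩ := my_exists_zpowers_eq h2
  have hoa : orderOf a = 2 ^ (lam - 1) := by rw [← Nat.card_zpowers, haeq, c1]
  have hob : orderOf b = 2 ^ (lam - 1) := by rw [← Nat.card_zpowers, hbeq, c2]
  have hbo : b ∉ zpowers a := by
    rw [haeq]
    intro hbK1
    apply n12
    have hle : K2 ≤ K1 := by rw [← hbeq]; exact zpowers_le.2 hbK1
    exact (Subgroup.eq_of_le_of_card_ge hle (by rw [c1, c2])).symm
  have hidx1 : K1.index = 2 := my_index_two hcard (by omega) c1
  have hidx2 : K2.index = 2 := my_index_two hcard (by omega) c2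
  have hb2 : b ^ 2 ∈ zpowers a := by
    rw [haeq]; exact Subgroup.sq_mem_of_index_two hidx1 b
  have ha2 : a ^ 2 ∈ zpowers b := by
    rw [hbeq]; exact Subgroup.sq_mem_of_index_two hidx2 a
  have hcj : b⁻¹ * a * b ∈ zpowers a := by
    rw [haeq]
    exact my_conj_mem_of_index_two hidx1 (by rw [← haeq]; exact mem_zpowers a) b
  obtain ⟨u, v, hc, hu, hv, huv, hu1, hv1⟩ := my_lemmaD hlam a b hoa hob hbo hb2 ha2 hcj
  obtain ⟨M, hMc, hMnc, _, _⟩ := my_invol_noncyclic_max hcard (by omega) hc hu hv huv hu1 hv1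
  exact ⟨M, hMc, hMnc⟩

lemma my_card_map (M : Subgroup G) (H : Subgroup M) :
    Nat.card (H.map M.subtype) = Nat.card H :=
  (Nat.card_congr (Subgroup.equivMapOfInjective H M.subtype M.subtype_injective).toEquiv).symm

end B
section C
variable {G : Type*} [Group G]

lemma my_finset_le {α : Type*} [Finite α] (S : Finset α) : S.card ≤ Nat.card α := by
  have := Fintype.ofFinite α
  rw [Nat.card_eq_fintype_card]
  exact S.card_le_univ

lemma my_eleven [Finite G] (hcard : Nat.card G = 2 ^ 4)
    (M M2 M3 H1 H2 H3 P Q R : Subgroup G)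
    (cM : Nat.card M = 8) (cM2 : Nat.card M2 = 8) (cM3 : Nat.card M3 = 8)
    (nM2 : M ≠ M2) (nM3 : M ≠ M3) (n23 : M2 ≠ M3)
    (cH1 : Nat.card H1 = 4) (cH2 : Nat.card H2 = 4) (cH3 : Nat.card H3 = 4)
    (n12 : H1 ≠ H2) (n13 : H1 ≠ H3) (nH23 : H2 ≠ H3)
    (cP : Nat.card P = 2 ∨ Nat.card P = 4) (cQ : Nat.card Q = 2 ∨ Nat.card Q = 4)
    (cR : Nat.card R = 2 ∨ Nat.card R = 4)
    (nPQ : P ≠ Q) (nPR : P ≠ R) (nQR : Q ≠ R)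
    (nH1P : H1 ≠ P) (nH1Q : H1 ≠ Q) (nH1R : H1 ≠ R)
    (nH2P : H2 ≠ P) (nH2Q : H2 ≠ Q) (nH2R : H2 ≠ R)
    (nH3P : H3 ≠ P) (nH3Q : H3 ≠ Q) (nH3R : H3 ≠ R) :
    11 ≤ Nat.card (Subgroup G) := by
  classical
  have cB : Nat.card (⊥ : Subgroup G) = 1 := Subgroup.card_bot
  have cT : Nat.card (⊤ : Subgroup G) = 16 := by
    rw [Subgroup.card_top, hcard]; norm_num
  have hnd : List.Nodup [(⊥ : Subgroup G), ⊤, M, M2, M3, H1, H2, H3, P, Q, R] := by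
    rcases cP with cP | cP <;> rcases cQ with cQ | cQ <;> rcases cR with cR | cR <;>
    · simp only [List.nodup_cons, List.mem_cons, List.not_mem_nil, or_false,
        List.nodup_nil, not_or, List.mem_singleton]
      and_intros <;> first
        | exact my_card_ne (by omega)
        | assumption
        | trivial
  have hS := List.toFinset_card_of_nodup hnd
  have hlen : [(⊥ : Subgroup G), ⊤, M, M2, M3, H1, H2, H3, P, Q, R].length = 11 := rfl
  have := my_finset_le [(⊥ : Subgroup G), ⊤, M, M2, M3, H1, H2, H3, P, Q, R].toFinset
  omega
end C
section E
variable {G : Type*} [Group G]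

lemma my_branch_a [Finite G] (hcard : Nat.card G = 2 ^ 4)
    (M M2 : Subgroup G) (cM : Nat.card M = 8) (cM2 : Nat.card M2 = 8) (hMM2 : M ≠ M2)
    (hM2nc : ¬ IsCyclic M2) :
    ∃ P Q : Subgroup G, Nat.card P = 4 ∧ Nat.card Q = 4 ∧ P ≠ Q ∧ ¬ P ≤ M ∧ ¬ Q ≤ M := by
  have cM2' : Nat.card M2 = 2 ^ 3 := by rw [cM2]; norm_num
  obtain ⟨B1, B2, B3, ⟨b1, b2, b3⟩, r12, r13, r23⟩ :=
    my_three_maximals cM2' (by norm_num) hM2nc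
  set K1 := B1.map M2.subtype with hK1
  set K2 := B2.map M2.subtype with hK2
  set K3 := B3.map M2.subtype with hK3
  have c1 : Nat.card K1 = 4 := by rw [hK1, my_card_map, b1]; norm_num
  have c2 : Nat.card K2 = 4 := by rw [hK2, my_card_map, b2]; norm_num
  have c3 : Nat.card K3 = 4 := by rw [hK3, my_card_map, b3]; norm_num
  have hinj := Subgroup.map_injective (Subgroup.subtype_injective M2)
  have d12 : K1 ≠ K2 := fun h => r12 (hinj h)
  have d13 : K1 ≠ K3 := fun h => r13 (hinj h)
  have d23 : K2 ≠ K3 := fun h => r23 (hinj h)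
  have hle1 : K1 ≤ M2 := Subgroup.map_subtype_le B1
  have hle2 : K2 ≤ M2 := Subgroup.map_subtype_le B2
  have hle3 : K3 ≤ M2 := Subgroup.map_subtype_le B3
  -- the intersection M ⊓ M2 has card ≤ 4
  have hMM2card : Nat.card (M ⊓ M2 : Subgroup G) ≤ 4 := by
    obtain ⟨j, hj, hc⟩ := my_card_subgroup_pow hcard (M ⊓ M2)
    have hle : Nat.card (M ⊓ M2 : Subgroup G) ≤ 8 := by
      have := Subgroup.card_le_of_le (inf_le_left (a := M) (b := M2))
      omega
    have hne8 : Nat.card (M ⊓ M2 : Subgroup G) ≠ 8 := by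
      intro h8
      have e1 : M ⊓ M2 = M :=
        Subgroup.eq_of_le_of_card_ge inf_le_left (by rw [h8, cM])
      have e2 : M ≤ M2 := by rw [← e1]; exact inf_le_right
      exact hMM2 (Subgroup.eq_of_le_of_card_ge e2 (by rw [cM, cM2]))
    interval_cases j <;> omega
  have hkey : ∀ K K' : Subgroup G, K ≤ M2 → K' ≤ M2 → Nat.card K = 4 → Nat.card K' = 4 →
      K ≤ M → K' ≤ M → K = K' := by
    intro K K' hKa hKa' hcK hcK' hKM hKM'
    have e1 : K = M ⊓ M2 :=
      Subgroup.eq_of_le_of_card_ge (le_inf hKM hKa) (by omega)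
    have e2 : K' = M ⊓ M2 :=
      Subgroup.eq_of_le_of_card_ge (le_inf hKM' hKa') (by omega)
    rw [e1, e2]
  by_cases h1 : K1 ≤ M
  · refine ⟨K2, K3, c2, c3, d23, ?_, ?_⟩
    · exact fun h => d12 (hkey K1 K2 hle1 hle2 c1 c2 h1 h)
    · exact fun h => d13 (hkey K1 K3 hle1 hle3 c1 c3 h1 h)
  · by_cases h2 : K2 ≤ M
    · refine ⟨K1, K3, c1, c3, d13, h1, ?_⟩
      exact fun h => d23 (hkey K2 K3 hle2 hle3 c2 c3 h2 h)
    · exact ⟨K1, K2, c1, c2, d12, h1, h2⟩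
end E
section F
variable {G : Type*} [Group G]

lemma my_base16 (G : Type*) [Group G] [Finite G] (hcard : Nat.card G = 2 ^ 4)
    (hnc : ¬ IsCyclic G) : 11 ≤ Nat.card (Subgroup G) := by
  have hfact : Fact (Nat.Prime 2) := ⟨Nat.prime_two⟩
  obtain ⟨M, cM', hMnc⟩ := my_exists_noncyclic_maximal hcard (le_refl 4) hnc
  have cM : Nat.card M = 8 := by rw [cM']; norm_num
  obtain ⟨N1, N2, N3, ⟨d1, d2, d3⟩, m12, m13, m23⟩ := my_three_maximals hcard (by norm_num) hnc
  have d1' : Nat.card N1 = 8 := by rw [d1]; norm_num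
  have d2' : Nat.card N2 = 8 := by rw [d2]; norm_num
  have d3' : Nat.card N3 = 8 := by rw [d3]; norm_num
  obtain ⟨M2, M3, cM2, cM3, hMM2, hMM3, h23⟩ :
      ∃ M2 M3 : Subgroup G, Nat.card M2 = 8 ∧ Nat.card M3 = 8 ∧ M ≠ M2 ∧ M ≠ M3 ∧ M2 ≠ M3 := by
    by_cases e1 : M = N1
    · exact ⟨N2, N3, d2', d3', by rw [e1]; exact m12, by rw [e1]; exact m13, m23⟩
    · by_cases e2 : M = N2
      · exact ⟨N1, N3, d1', d3', e1, by rw [e2]; exact m23, m13⟩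
      · exact ⟨N1, N2, d1', d2', e1, e2, m12⟩
  have cM8 : Nat.card M = 2 ^ 3 := by rw [cM]; norm_num
  obtain ⟨A1, A2, A3, ⟨a1, a2, a3⟩, q12, q13, q23⟩ :=
    my_three_maximals (G := ↥M) cM8 (by norm_num) hMnc
  set H1 := A1.map M.subtype with hH1
  set H2 := A2.map M.subtype with hH2
  set H3 := A3.map M.subtype with hH3
  have cH1 : Nat.card H1 = 4 := by rw [hH1, my_card_map, a1]; norm_num
  have cH2 : Nat.card H2 = 4 := by rw [hH2, my_card_map, a2]; norm_num
  have cH3 : Nat.card H3 = 4 := by rw [hH3, my_card_map, a3]; norm_num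
  have hinj := Subgroup.map_injective (Subgroup.subtype_injective M)
  have n12 : H1 ≠ H2 := fun h => q12 (hinj h)
  have n13 : H1 ≠ H3 := fun h => q13 (hinj h)
  have n23' : H2 ≠ H3 := fun h => q23 (hinj h)
  have hH1le : H1 ≤ M := Subgroup.map_subtype_le A1
  have hH2le : H2 ≤ M := Subgroup.map_subtype_le A2
  have hH3le : H3 ≤ M := Subgroup.map_subtype_le A3
  -- branch on cyclicity of M2, M3
  by_cases hcy2 : IsCyclic M2
  · by_cases hcy3 : IsCyclic M3
    · -- both cyclic : produce involutions
      obtain ⟨a, haeq⟩ := my_exists_zpowers_eq hcy2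
      obtain ⟨b, hbeq⟩ := my_exists_zpowers_eq hcy3
      have cM2' : Nat.card M2 = 2 ^ (4 - 1) := by rw [cM2]; norm_num
      have cM3' : Nat.card M3 = 2 ^ (4 - 1) := by rw [cM3]; norm_num
      have hoa : orderOf a = 2 ^ (4 - 1) := by rw [← Nat.card_zpowers, haeq, cM2]; norm_num
      have hob : orderOf b = 2 ^ (4 - 1) := by rw [← Nat.card_zpowers, hbeq, cM3]; norm_num
      have hbo : b ∉ zpowers a := by
        rw [haeq]
        intro hbM2
        apply h23
        have hle : M3 ≤ M2 := by rw [← hbeq]; exact zpowers_le.2 hbM2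
        exact (Subgroup.eq_of_le_of_card_ge hle (by rw [cM2, cM3])).symm
      have hidx2 : M2.index = 2 := my_index_two hcard (by norm_num) cM2'
      have hidx3 : M3.index = 2 := my_index_two hcard (by norm_num) cM3'
      have hb2 : b ^ 2 ∈ zpowers a := by
        rw [haeq]; exact Subgroup.sq_mem_of_index_two hidx2 b
      have ha2 : a ^ 2 ∈ zpowers b := by
        rw [hbeq]; exact Subgroup.sq_mem_of_index_two hidx3 a
      have hcj : b⁻¹ * a * b ∈ zpowers a := by
        rw [haeq]
        exact my_conj_mem_of_index_two hidx2 (by rw [← haeq]; exact mem_zpowers a) b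
      obtain ⟨u, v, hcm, hu, hv, huv, hu1, hv1⟩ :=
        my_lemmaD (le_refl 4) a b hoa hob hbo hb2 ha2 hcj
      -- facts about u*v
      have huu : u * u = 1 := by rw [← pow_two]; exact hu
      have hvv : v * v = 1 := by rw [← pow_two]; exact hv
      have huv2 : (u * v) ^ 2 = 1 := by
        rw [pow_two, mul_assoc u v, show v * (u * v) = u by
          rw [hcm, ← mul_assoc, hvv, one_mul], huu]
      have huvne1 : u * v ≠ 1 := by
        intro h
        have h2 : v = u⁻¹ := eq_inv_of_mul_eq_one_right h
        have h3 : u⁻¹ = u := inv_eq_of_mul_eq_one_right huu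
        exact huv (by rw [h2, h3])
      have huvu : u * v ≠ u := fun h => hv1 (by
        have := h.trans (mul_one u).symm
        exact mul_left_cancel this)
      have huvv : u * v ≠ v := fun h => hu1 (by
        have := h.trans (one_mul v).symm
        exact mul_right_cancel this)
      -- the three order-2 subgroups
      have cZu : Nat.card (zpowers u) = 2 := by
        rw [Nat.card_zpowers, orderOf_eq_prime hu hu1]
      have cZv : Nat.card (zpowers v) = 2 := by
        rw [Nat.card_zpowers, orderOf_eq_prime hv hv1]
      have cZw : Nat.card (zpowers (u * v)) = 2 := by
        rw [Nat.card_zpowers, orderOf_eq_prime huv2 huvne1]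
      have nZuv : zpowers u ≠ zpowers v := by
        intro h
        have hm : v ∈ zpowers u := by rw [h]; exact mem_zpowers v
        rcases my_mem_zpowers_invol hu hm with h1 | h1
        · exact hv1 h1
        · exact huv h1.symm
      have nZuw : zpowers u ≠ zpowers (u * v) := by
        intro h
        have hm : u * v ∈ zpowers u := by rw [h]; exact mem_zpowers _
        rcases my_mem_zpowers_invol hu hm with h1 | h1
        · exact huvne1 h1
        · exact huvu h1
      have nZvw : zpowers v ≠ zpowers (u * v) := by
        intro h
        have hm : u * v ∈ zpowers v := by rw [h]; exact mem_zpowers _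
        rcases my_mem_zpowers_invol hv hm with h1 | h1
        · exact huvne1 h1
        · exact huvv h1
      exact my_eleven hcard M M2 M3 H1 H2 H3 (zpowers u) (zpowers v) (zpowers (u * v))
        cM cM2 cM3 hMM2 hMM3 h23 cH1 cH2 cH3 n12 n13 n23'
        (Or.inl cZu) (Or.inl cZv) (Or.inl cZw) nZuv nZuw nZvw
        (my_card_ne (by omega)) (my_card_ne (by omega)) (my_card_ne (by omega))
        (my_card_ne (by omega)) (my_card_ne (by omega)) (my_card_ne (by omega))
        (my_card_ne (by omega)) (my_card_ne (by omega)) (my_card_ne (by omega))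
    · -- M3 noncyclic : branch a
      obtain ⟨T0, hT0⟩ := Sylow.exists_subgroup_card_pow_prime (G := ↥M) 2 (n := 1)
        (by rw [cM8]; exact pow_dvd_pow 2 (by norm_num))
      set T := T0.map M.subtype with hT
      have cT2 : Nat.card T = 2 := by rw [hT, my_card_map, hT0]; norm_num
      have hTle : T ≤ M := Subgroup.map_subtype_le T0
      obtain ⟨P, Q, cP, cQ, nPQ, hP, hQ⟩ := my_branch_a hcard M M3 cM cM3 hMM3 hcy3
      exact my_eleven hcard M M2 M3 H1 H2 H3 T P Q
        cM cM2 cM3 hMM2 hMM3 h23 cH1 cH2 cH3 n12 n13 n23'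
        (Or.inl cT2) (Or.inr cP) (Or.inr cQ)
        (fun h => hP (h ▸ hTle)) (fun h => hQ (h ▸ hTle)) nPQ
        (my_card_ne (by omega)) (fun h => hP (h ▸ hH1le)) (fun h => hQ (h ▸ hH1le))
        (my_card_ne (by omega)) (fun h => hP (h ▸ hH2le)) (fun h => hQ (h ▸ hH2le))
        (my_card_ne (by omega)) (fun h => hP (h ▸ hH3le)) (fun h => hQ (h ▸ hH3le))
  · -- M2 noncyclic : branch a
    obtain ⟨T0, hT0⟩ := Sylow.exists_subgroup_card_pow_prime (G := ↥M) 2 (n := 1)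
      (by rw [cM8]; exact pow_dvd_pow 2 (by norm_num))
    set T := T0.map M.subtype with hT
    have cT2 : Nat.card T = 2 := by rw [hT, my_card_map, hT0]; norm_num
    have hTle : T ≤ M := Subgroup.map_subtype_le T0
    obtain ⟨P, Q, cP, cQ, nPQ, hP, hQ⟩ := my_branch_a hcard M M2 cM cM2 hMM2 hcy2
    exact my_eleven hcard M M2 M3 H1 H2 H3 T P Q
      cM cM2 cM3 hMM2 hMM3 h23 cH1 cH2 cH3 n12 n13 n23'
      (Or.inl cT2) (Or.inr cP) (Or.inr cQ)
      (fun h => hP (h ▸ hTle)) (fun h => hQ (h ▸ hTle)) nPQ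
      (my_card_ne (by omega)) (fun h => hP (h ▸ hH1le)) (fun h => hQ (h ▸ hH1le))
      (my_card_ne (by omega)) (fun h => hP (h ▸ hH2le)) (fun h => hQ (h ▸ hH2le))
      (my_card_ne (by omega)) (fun h => hP (h ▸ hH3le)) (fun h => hQ (h ▸ hH3le))
end F
section H
universe u

lemma my_step {n : ℕ} (hn : 4 ≤ n) (G : Type u) [Group G] [Finite G]
    (hcard : Nat.card G = 2 ^ (n + 1)) (hnc : ¬ IsCyclic G)
    (IH : ∀ (H : Type u) [Group H], Nat.card H = 2 ^ n → ¬ IsCyclic H →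
      3 * n - 1 ≤ Nat.card (Subgroup H)) :
    3 * (n + 1) - 1 ≤ Nat.card (Subgroup G) := by
  classical
  obtain ⟨M, cM, hMnc⟩ := my_exists_noncyclic_maximal hcard (by omega) hnc
  have cM' : Nat.card M = 2 ^ n := by rw [cM]; congr 1
  have hIH := IH M cM' hMnc
  obtain ⟨x, y, hx, hy, hxy⟩ := my_two_outside hcard (by omega) hnc M cM
  have hMneT : M ≠ ⊤ := by
    intro h
    rw [h, Subgroup.card_top, hcard] at cM'
    have : (2:ℕ) ^ n < 2 ^ (n + 1) := Nat.pow_lt_pow_right one_lt_two (by omega)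
    omega
  set vec : Fin 3 → Subgroup G := ![⊤, Subgroup.zpowers x, Subgroup.zpowers y] with hvec
  have hnotle : ∀ i : Fin 3, ¬ (vec i ≤ M) := by
    intro i
    fin_cases i
    · exact fun hle => hMneT (top_le_iff.1 hle)
    · exact fun hle => hx (hle (Subgroup.mem_zpowers x))
    · exact fun hle => hy (hle (Subgroup.mem_zpowers y))
  have hdist : ∀ i j : Fin 3, vec i = vec j → i = j := by
    intro i j h
    fin_cases i <;> fin_cases j <;> simp_all [hvec]
    · exact (my_zpowers_ne_top hnc x) h.symm
    · exact (my_zpowers_ne_top hnc y) h.symm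
    · exact (my_zpowers_ne_top hnc x) h
    · exact (my_zpowers_ne_top hnc y) h
  set f : Subgroup M ⊕ Fin 3 → Subgroup G :=
    Sum.elim (fun H => H.map M.subtype) vec with hf
  have hinj : Function.Injective f := by
    rintro (H | i) (H' | j) h
    · simp only [hf, Sum.elim_inl] at h
      exact congrArg Sum.inl (Subgroup.map_injective (Subgroup.subtype_injective M) h)
    · exfalso
      simp only [hf, Sum.elim_inl, Sum.elim_inr] at h
      exact hnotle j (h ▸ Subgroup.map_subtype_le H)
    · exfalso
      simp only [hf, Sum.elim_inl, Sum.elim_inr] at h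
      exact hnotle i (h.symm ▸ Subgroup.map_subtype_le H')
    · simp only [hf, Sum.elim_inr] at h
      exact congrArg Sum.inr (hdist i j h)
  have hle := Nat.card_le_card_of_injective f hinj
  have hsum : Nat.card (Subgroup M ⊕ Fin 3) = Nat.card (Subgroup M) + 3 := by
    rw [Nat.card_sum]; simp
  omega

lemma my_key : ∀ lam : ℕ, 4 ≤ lam → ∀ (G : Type u) [Group G],
    Nat.card G = 2 ^ lam → ¬ IsCyclic G → 3 * lam - 1 ≤ Nat.card (Subgroup G) := by
  intro lam hlam
  induction lam, hlam using Nat.le_induction with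
  | base =>
    intro G _ hcard hnc
    have : Finite G := Nat.finite_of_card_ne_zero (by rw [hcard]; positivity)
    have := my_base16 G hcard hnc
    omega
  | succ n hn IH =>
    intro G _ hcard hnc
    have : Finite G := Nat.finite_of_card_ne_zero (by rw [hcard]; positivity)
    exact my_step hn G hcard hnc (fun H _ hc hnc' => IH H hc hnc')
end H

theorem noncyclic_two_group_subgroup_lower_bound
    (lam : ℕ) (hlam : 5 ≤ lam)
    (G : Type*) [Group G] (hcard : Nat.card G = 2 ^ lam)
    (hnc : ¬ IsCyclic G) :
    3 * lam - 1 ≤ Nat.card (Subgroup G) :=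
  my_key lam (by omega) G hcard hnc
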